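/- Let m ≥ 1 and N be even with N ≥ 1, and let n : Fin m → ℕ with ∑_j n j = N. Suppose at least four indices j have n j odd. Then 2 · γ(D_N, n) = γ(C_N, n), where γ(C_N, n) and γ(D_N, n) are the numbers of cyclic and dihedral necklaces with multiplicities n. -/

import Mathlib

/-- A coloring of the regular `N`-gon in `m` colors with multiplicities `n`:
a function `f : ZMod N → Fin m` whose fiber over each color `j` has cardinality `n j`. -/
def IsColoring (N m : ℕ) (n : Fin m → ℕ) (f : ZMod N → Fin m) : Prop :=
  ∀ j, Nat.card {x : ZMod N // f x = j} = n j

/-- Cyclic equivalence of colorings: one is obtained from the other by a rotation `x ↦ x + c`. -/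
def cyclicSetoid (N m : ℕ) (n : Fin m → ℕ) :
    Setoid {f : ZMod N → Fin m // IsColoring N m n f} where
  r f g := ∃ c : ZMod N, ∀ x, (g : ZMod N → Fin m) x = (f : ZMod N → Fin m) (x + c)
  iseqv := by
    refine ⟨fun f => ⟨0, fun x => by rw [add_zero]⟩, ?_, ?_⟩
    · rintro f g ⟨c, h⟩
      exact ⟨-c, fun x => by rw [h, neg_add_cancel_right]⟩
    · rintro f g k ⟨c, h1⟩ ⟨d, h2⟩
      exact ⟨d + c, fun x => by rw [h2, h1, add_assoc]⟩

/-- The number of cyclic necklaces: orbits of colorings under rotations. -/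
noncomputable def gammaC (N m : ℕ) (n : Fin m → ℕ) : ℕ :=
  Nat.card (Quotient (cyclicSetoid N m n))

/-- Dihedral equivalence of colorings: one is obtained from the other by an element of
the subgroup of permutations of `ZMod N` generated by `x ↦ x + 1` and `x ↦ -x`. -/
def dihedralSetoid (N m : ℕ) (n : Fin m → ℕ) :
    Setoid {f : ZMod N → Fin m // IsColoring N m n f} where
  r f g := ∃ σ ∈ Subgroup.closure
      ({Equiv.addRight (1 : ZMod N), Equiv.neg (ZMod N)} : Set (Equiv.Perm (ZMod N))),
      ∀ x, (g : ZMod N → Fin m) x = (f : ZMod N → Fin m) (σ x)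
  iseqv := by
    refine ⟨fun f => ⟨1, one_mem _, fun x => rfl⟩, ?_, ?_⟩
    · rintro f g ⟨σ, hσ, h⟩
      exact ⟨σ⁻¹, inv_mem hσ, fun x => by rw [h, ← Equiv.Perm.mul_apply, mul_inv_cancel, Equiv.Perm.one_apply]⟩
    · rintro f g k ⟨σ, hσ, h1⟩ ⟨τ, hτ, h2⟩
      exact ⟨σ * τ, mul_mem hσ hτ, fun x => by rw [h2, h1, Equiv.Perm.mul_apply]⟩

/-- The number of dihedral necklaces: orbits of colorings under rotations and reflections. -/
noncomputable def gammaD (N m : ℕ) (n : Fin m → ℕ) : ℕ :=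
  Nat.card (Quotient (dihedralSetoid N m n))


open Finset in
lemma aux_even_card {α : Type*} [DecidableEq α] (ι : α → α) (hι : ∀ x, ι (ι x) = x) :
    ∀ s : Finset α, (∀ x ∈ s, ι x ∈ s) → (∀ x ∈ s, ι x ≠ x) → Even s.card := by
  intro s
  induction s using Finset.strongInduction with
  | _ s ih =>
    intro hstab hnf
    rcases s.eq_empty_or_nonempty with rfl | ⟨x, hx⟩
    · simp
    · have hιx := hstab x hx
      have hne : ι x ≠ x := hnf x hx
      have hsub : ({x, ι x} : Finset α) ⊆ s := by
        intro y hy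
        rcases Finset.mem_insert.mp hy with rfl | hy
        · exact hx
        · rcases Finset.mem_singleton.mp hy with rfl; exact hιx
      have hss : s \ {x, ι x} ⊂ s :=
        Finset.sdiff_ssubset hsub ⟨x, Finset.mem_insert_self _ _⟩
      have hstab' : ∀ y ∈ s \ {x, ι x}, ι y ∈ s \ {x, ι x} := by
        intro y hy
        simp only [Finset.mem_sdiff, Finset.mem_insert, Finset.mem_singleton, not_or] at hy ⊢
        obtain ⟨hys, hyx, hyιx⟩ := hy
        refine ⟨hstab y hys, fun h => hyιx ?_, fun h => hyx ?_⟩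
        · rw [← hι y, h]
        · have := congrArg ι h; rwa [hι, hι] at this
      have hev := ih _ hss hstab' (fun y hy => hnf y (Finset.mem_sdiff.mp hy).1)
      have h2 : ({x, ι x} : Finset α).card = 2 := Finset.card_pair (Ne.symm hne)
      have hle : 2 ≤ s.card := h2 ▸ Finset.card_le_card hsub
      have hc : (s \ {x, ι x}).card = s.card - 2 := by rw [Finset.card_sdiff_of_subset hsub, h2]
      rw [hc] at hev
      obtain ⟨k, hk⟩ := hev
      exact ⟨k + 1, by omega⟩

lemma aux_two_mul_eq_zero {N : ℕ} [NeZero N] (hN : Even N) (x : ZMod N) (h : x + x = 0) :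
    x = 0 ∨ x = (N / 2 : ℕ) := by
  have hv : ((x.val + x.val : ℕ) : ZMod N) = 0 := by push_cast [ZMod.natCast_val, ZMod.cast_id]; exact h
  have hdvd : N ∣ x.val + x.val := (ZMod.natCast_eq_zero_iff _ _).mp hv
  have hlt : x.val < N := ZMod.val_lt x
  have hxx : ((x.val : ℕ) : ZMod N) = x := ZMod.natCast_rightInverse x
  obtain ⟨k, hk⟩ := hN
  obtain ⟨c, hc⟩ := hdvd
  have hc2 : c < 2 := by
    by_contra hc2
    push_neg at hc2
    have : N * 2 ≤ N * c := Nat.mul_le_mul_left N hc2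
    omega
  interval_cases c <;> [left; right] <;> rw [← hxx] <;> [skip; skip]
  · have : x.val = 0 := by omega
    rw [this]; simp
  · have : x.val = N / 2 := by omega
    rw [this]

lemma aux_addRight_pow (N : ℕ) (k : ℕ) :
    (Equiv.addRight (1 : ZMod N)) ^ k = Equiv.addRight (k : ZMod N) := by
  induction k with
  | zero => ext x; simp
  | succ k ih =>
    ext x
    rw [pow_succ]
    simp only [Equiv.Perm.mul_apply, ih, Equiv.coe_addRight]
    push_cast
    ring

lemma aux_rot_mem (N : ℕ) [NeZero N] (c : ZMod N) :
    Equiv.addRight c ∈ Subgroup.closure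
      ({Equiv.addRight (1 : ZMod N), Equiv.neg (ZMod N)} : Set (Equiv.Perm (ZMod N))) := by
  have h1 : Equiv.addRight (1 : ZMod N) ∈ Subgroup.closure
      ({Equiv.addRight (1 : ZMod N), Equiv.neg (ZMod N)} : Set (Equiv.Perm (ZMod N))) :=
    Subgroup.subset_closure (Set.mem_insert _ _)
  have := Subgroup.pow_mem _ h1 c.val
  rwa [aux_addRight_pow, ZMod.natCast_val, ZMod.cast_id] at this

lemma aux_neg_mem (N : ℕ) :
    Equiv.neg (ZMod N) ∈ Subgroup.closure
      ({Equiv.addRight (1 : ZMod N), Equiv.neg (ZMod N)} : Set (Equiv.Perm (ZMod N))) :=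
  Subgroup.subset_closure (Set.mem_insert_of_mem _ rfl)

lemma aux_classify {N : ℕ} (σ : Equiv.Perm (ZMod N))
    (hσ : σ ∈ Subgroup.closure
      ({Equiv.addRight (1 : ZMod N), Equiv.neg (ZMod N)} : Set (Equiv.Perm (ZMod N)))) :
    (∃ c, ∀ x, σ x = x + c) ∨ (∃ a, ∀ x, σ x = a - x) := by
  refine Subgroup.closure_induction ?_ ?_ ?_ ?_ hσ
  · rintro τ (rfl | rfl)
    · exact Or.inl ⟨1, fun x => rfl⟩
    · exact Or.inr ⟨0, fun x => by simp [Equiv.neg_apply]⟩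
  · exact Or.inl ⟨0, fun x => (add_zero x).symm⟩
  · rintro σ τ _ _ (⟨c, hc⟩ | ⟨a, ha⟩) (⟨d, hd⟩ | ⟨b, hb⟩)
    · exact Or.inl ⟨d + c, fun x => by simp [Equiv.Perm.mul_apply, hc, hd, add_assoc]⟩
    · exact Or.inr ⟨b + c, fun x => by simp only [Equiv.Perm.mul_apply, hc, hb]; ring⟩
    · exact Or.inr ⟨a - d, fun x => by simp only [Equiv.Perm.mul_apply, hd, ha]; ring⟩
    · exact Or.inl ⟨a - b, fun x => by simp only [Equiv.Perm.mul_apply, hb, ha]; ring⟩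
  · rintro σ _ (⟨c, hc⟩ | ⟨a, ha⟩)
    · refine Or.inl ⟨-c, fun x => σ.injective ?_⟩
      rw [← Equiv.Perm.mul_apply, mul_inv_cancel, Equiv.Perm.one_apply, hc]
      ring
    · refine Or.inr ⟨a, fun x => σ.injective ?_⟩
      rw [← Equiv.Perm.mul_apply, mul_inv_cancel, Equiv.Perm.one_apply, ha]
      ring
lemma aux_no_reflection {m N : ℕ} [NeZero N] (hNeven : Even N) (n : Fin m → ℕ)
    (hodd : 4 ≤ (Finset.univ.filter (fun j => Odd (n j))).card)
    (f : ZMod N → Fin m) (hf : IsColoring N m n f) (a : ZMod N) :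
    ¬ (∀ x, f (a - x) = f x) := by
  classical
  intro h
  set ι : ZMod N → ZMod N := fun x => a - x with hιdef
  have hι : ∀ x, ι (ι x) = x := fun x => by simp [hιdef]
  -- every odd color class contains a fixed point of ι
  have hfix : ∀ j : Fin m, Odd (n j) → ∃ x, f x = j ∧ ι x = x := by
    intro j hj
    set s : Finset (ZMod N) := Finset.univ.filter (fun x => f x = j) with hs
    have hcard : s.card = n j := by
      rw [← hf j, Nat.card_eq_fintype_card, Fintype.card_subtype]
    have hstab : ∀ x ∈ s, ι x ∈ s := by
      intro x hx
      simp only [hs, Finset.mem_filter, Finset.mem_univ, true_and] at hx ⊢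
      rw [hιdef]; simp only []
      rw [h x]; exact hx
    by_contra hno
    push_neg at hno
    have : Even s.card := aux_even_card ι hι s hstab (by
      intro x hx
      exact hno x (by simpa [hs, Finset.mem_filter] using hx))
    rw [hcard] at this
    exact (Nat.not_even_iff_odd.mpr hj) this
  -- choose fixed points
  choose g hg1 hg2 using hfix
  -- fixed points of ι number at most 2
  have hfixcard : (Finset.univ.filter (fun x : ZMod N => ι x = x)).card ≤ 2 := by
    set F := Finset.univ.filter (fun x : ZMod N => ι x = x) with hF
    rcases F.eq_empty_or_nonempty with hE | ⟨x0, hx0⟩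
    · rw [hE]; simp
    · have hx0' : ι x0 = x0 := by simpa [hF] using hx0
      have hsub : F ⊆ {x0, x0 + (N / 2 : ℕ)} := by
        intro x hx
        have hx' : ι x = x := by simpa [hF] using hx
        have e1 : a - x = x := hx'
        have e2 : a - x0 = x0 := hx0'
        have key : (x - x0) + (x - x0) = 0 := by linear_combination e2 - e1
        rcases aux_two_mul_eq_zero hNeven _ key with h0 | h0
        · rw [sub_eq_zero] at h0
          simp [h0]
        · have : x = x0 + (N / 2 : ℕ) := by linear_combination h0
          simp [this]
      refine le_trans (Finset.card_le_card hsub) ?_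
      refine le_trans (Finset.card_insert_le _ _) ?_
      simp
  -- injection from odd colors into fixed points
  have hinj : Finset.card (Finset.univ.filter (fun j => Odd (n j))) ≤
      (Finset.univ.filter (fun x : ZMod N => ι x = x)).card := by
    apply Finset.card_le_card_of_injOn (fun j => if hj : Odd (n j) then g j hj else 0)
    · intro j hj
      simp only [Finset.coe_filter, Set.mem_setOf_eq, Finset.mem_filter, Finset.mem_univ, true_and] at hj ⊢
      rw [dif_pos hj]
      exact hg2 j hj
    · intro j1 h1 j2 h2 he
      simp only [Finset.coe_filter, Set.mem_setOf_eq, Finset.mem_univ, true_and] at h1 h2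
      simp only [dif_pos h1, dif_pos h2] at he
      have e1 := hg1 j1 h1
      rw [he, hg1 j2 h2] at e1
      exact e1.symm
  omega

def pairSetoid {α : Type*} (R : α → α) (hR : ∀ x, R (R x) = x) : Setoid α where
  r q q' := q' = q ∨ q' = R q
  iseqv := by
    refine ⟨fun q => Or.inl rfl, ?_, ?_⟩
    · rintro q q' (rfl | rfl)
      · exact Or.inl rfl
      · exact Or.inr (hR q).symm
    · rintro q q' q'' (rfl | rfl) (rfl | h)
      · exact Or.inl rfl
      · exact Or.inr h
      · exact Or.inr rfl
      · rw [hR] at h; exact Or.inl h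

lemma card_pairSetoid {α : Type*} [Finite α] (R : α → α) (hR : ∀ x, R (R x) = x)
    (hfree : ∀ x, R x ≠ x) :
    Nat.card α = 2 * Nat.card (Quotient (pairSetoid R hR)) := by
  classical
  cases nonempty_fintype α
  haveI : Fintype (Quotient (pairSetoid R hR)) := Fintype.ofFinite _
  rw [Nat.card_eq_fintype_card, Nat.card_eq_fintype_card, ← Finset.card_univ,
    Finset.card_eq_sum_card_fiberwise
      (f := fun x : α => (Quotient.mk (pairSetoid R hR) x)) (t := Finset.univ)
      (fun x _ => Finset.mem_univ _)]
  rw [← Finset.card_univ, Finset.card_eq_sum_ones, Finset.mul_sum]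
  refine Finset.sum_congr rfl ?_
  intro q _
  induction q using Quotient.ind with
  | _ x0 =>
    have : Finset.univ.filter
        (fun x : α => Quotient.mk (pairSetoid R hR) x = Quotient.mk (pairSetoid R hR) x0) =
        {x0, R x0} := by
      ext x
      simp only [Finset.mem_filter, Finset.mem_univ, true_and, Finset.mem_insert,
        Finset.mem_singleton, Quotient.eq]
      constructor
      · rintro (rfl | h)
        · exact Or.inl rfl
        · exact Or.inr (by rw [h, hR])
      · rintro (rfl | rfl)
        · exact Or.inl rfl
        · exact Or.inr (hR x0).symm
    rw [this, Finset.card_pair (fun h => hfree x0 h.symm), mul_one]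
/-- Dihedral necklaces for even `N` with at least four odd multiplicities:
`2 γ(D_N, n) = γ(C_N, n)`. -/
theorem dihedral_necklace_even_many_odd_colors (m N : ℕ) (hm : 1 ≤ m) (hN : 1 ≤ N)
    (hNeven : Even N) (n : Fin m → ℕ) (hsum : ∑ j, n j = N)
    (hodd : 4 ≤ (Finset.univ.filter (fun j => Odd (n j))).card) :
    2 * gammaD N m n = gammaC N m n := by
  classical
  haveI : NeZero N := ⟨by omega⟩
  set X := {f : ZMod N → Fin m // IsColoring N m n f} with hX
  -- the reflection x ↦ -x acting on colorings
  have hRcol : ∀ f : ZMod N → Fin m, IsColoring N m n f →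
      IsColoring N m n (fun x => f (-x)) := by
    intro f hf j
    rw [← hf j]
    exact Nat.card_congr (Equiv.subtypeEquiv (Equiv.neg (ZMod N))
      (fun x => by simp [Equiv.neg_apply]))
  set R0 : X → X := fun f => ⟨fun x => f.1 (-x), hRcol f.1 f.2⟩ with hR0
  have hR0inv : ∀ f, R0 (R0 f) = f := by
    intro f
    apply Subtype.ext
    funext x
    simp [hR0]
  set S := cyclicSetoid N m n with hS
  have hcompat : ∀ f g : X, S.r f g → S.r (R0 f) (R0 g) := by
    rintro f g ⟨c, h⟩
    refine ⟨-c, fun x => ?_⟩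
    show g.1 (-x) = f.1 (-(x + -c))
    rw [h (-x)]
    ring_nf
  set R : Quotient S → Quotient S :=
    Quotient.map R0 hcompat with hRdef
  have hRinv : ∀ q, R (R q) = q := by
    intro q
    induction q using Quotient.ind with
    | _ f => rw [hRdef]; simp only [Quotient.map_mk, hR0inv]
  have hfree : ∀ q, R q ≠ q := by
    intro q
    induction q using Quotient.ind with
    | _ f =>
      intro hq
      rw [hRdef] at hq
      simp only [Quotient.map_mk] at hq
      have hr : S.r f (R0 f) := Quotient.exact hq.symm
      obtain ⟨c, hc⟩ := hr
      refine aux_no_reflection hNeven n hodd f.1 f.2 c (fun x => ?_)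
      have h2 := hc (x - c)
      calc f.1 (c - x) = (R0 f).1 (x - c) := by
            show _ = f.1 (-(x - c)); congr 1; ring
        _ = f.1 (x - c + c) := hc (x - c)
        _ = f.1 x := by congr 1; ring
  -- gammaC = 2 * card of pair quotient
  have hcount : gammaC N m n = 2 * Nat.card (Quotient (pairSetoid R hRinv)) :=
    card_pairSetoid R hRinv hfree
  -- pair quotient ≃ dihedral quotient
  set D := dihedralSetoid N m n with hD
  have hsub : ∀ f g : X, S.r f g → D.r f g := by
    rintro f g ⟨c, h⟩
    exact ⟨Equiv.addRight c, aux_rot_mem N c, fun x => by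
      rw [Equiv.coe_addRight]; exact h x⟩
  set φ : Quotient S → Quotient D := Quotient.map id hsub with hφ
  have hφR : ∀ q, φ (R q) = φ q := by
    intro q
    induction q using Quotient.ind with
    | _ f =>
      rw [hRdef, hφ]
      simp only [Quotient.map_mk, id]
      apply Quotient.sound
      exact Setoid.symm ⟨Equiv.neg (ZMod N), aux_neg_mem N, fun x => rfl⟩
  set ψ : Quotient (pairSetoid R hRinv) → Quotient D :=
    Quotient.lift φ (by
      rintro q q' (rfl | rfl)
      · rfl
      · exact (hφR q).symm) with hψ
  have hbij : Function.Bijective ψ := by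
    constructor
    · intro p1 p2 hp
      induction p1 using Quotient.ind with
      | _ q1 =>
        induction p2 using Quotient.ind with
        | _ q2 =>
          induction q1 using Quotient.ind with
          | _ f =>
            induction q2 using Quotient.ind with
            | _ g =>
              have : D.r f g := Quotient.exact hp
              obtain ⟨σ, hσ, hfg⟩ := this
              apply Quotient.sound
              rcases aux_classify σ hσ with ⟨c, hc⟩ | ⟨a, ha⟩
              · have : S.r f g := ⟨c, fun x => by rw [hfg x, hc x]⟩
                exact Or.inl (Quotient.sound this).symm
              · right
                rw [hRdef]
                simp only [Quotient.map_mk]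
                apply Quotient.sound
                refine ⟨a, fun x => ?_⟩
                show f.1 (-x) = g.1 (x + a)
                rw [hfg (x + a), ha (x + a), show (a - (x + a) : ZMod N) = -x by ring]
    · intro p
      induction p using Quotient.ind with
      | _ g => exact ⟨Quotient.mk _ (Quotient.mk _ g), rfl⟩
  have : Nat.card (Quotient (pairSetoid R hRinv)) = gammaD N m n :=
    Nat.card_congr (Equiv.ofBijective ψ hbij)
  rw [hcount, this]
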